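/- Let B be a strongly E-Birkhoff Galois structure on a Barr exact category C, and assume the level-one Galois structure exists: the full subcategory Cov(C) of Ext(C) determined by the coverings is reflective with reflector F₁ and unit η¹, each unit component η¹_f : f → F₁(f) is a double extension, and this reflection is strongly E₂-Birkhoff. Let τ be a double extension which is symmetrically trivial: there is a discrete fibration τ → β whose codomain β is a double extension all four of whose vertices are objects of B. Then τ, regarded as a morphism of Ext(C) in either of the two possible directions, is a trivial double covering. -/

import Mathlib

open CategoryTheory CategoryTheory.Limits

universe v u

namespace Paper

variable {C : Type u} [Category.{v} C]

/-- `f` is a regular epimorphism. -/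
def IsRegEpi {X Y : C} (f : X ⟶ Y) : Prop := Nonempty (RegularEpi f)

/-- A regular category: a finitely complete category with coequalizers of kernel pairs in
which regular epimorphisms are stable under pullback. -/
class RegularCat (C : Type u) [Category.{v} C] [HasFiniteLimits C] : Prop where
  hasCoeqOfKernelPairs : ∀ {X Y : C} (f : X ⟶ Y),
    HasCoequalizer (pullback.fst f f) (pullback.snd f f)
  regEpiPullbackStable : ∀ {X Y Z : C} (f : X ⟶ Y) (g : Z ⟶ Y),
    IsRegEpi f → IsRegEpi (pullback.snd f g)

/-- An internal equivalence relation given by a parallel pair `r₁ r₂ : R ⟶ X`. -/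
structure IsEquivRel [HasFiniteLimits C] {R X : C} (r₁ r₂ : R ⟶ X) : Prop where
  jointlyMono : Mono (prod.lift r₁ r₂)
  refl : ∃ d : X ⟶ R, d ≫ r₁ = 𝟙 X ∧ d ≫ r₂ = 𝟙 X
  symm : ∃ s : R ⟶ R, s ≫ r₁ = r₂ ∧ s ≫ r₂ = r₁
  trans : ∃ t : pullback r₂ r₁ ⟶ R,
    t ≫ r₁ = pullback.fst r₂ r₁ ≫ r₁ ∧ t ≫ r₂ = pullback.snd r₂ r₁ ≫ r₂

/-- A Barr exact category: a regular category in which every internal equivalence relation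
is effective (i.e. is a kernel pair). -/
class BarrExact (C : Type u) [Category.{v} C] [HasFiniteLimits C] extends RegularCat C : Prop where
  equivRelEffective : ∀ {R X : C} (r₁ r₂ : R ⟶ X), IsEquivRel r₁ r₂ →
    ∃ (Y : C) (f : X ⟶ Y), IsKernelPair f r₁ r₂

section DoubleExt
variable [HasFiniteLimits C]

/-- A double extension: a commutative square `αt ≫ fB = fA ≫ αb` of regular epimorphisms
whose comparison morphism to the pullback is also a regular epimorphism. -/
structure IsDoubleExt {A₁ A₀ B₁ B₀ : C} (fA : A₁ ⟶ A₀) (fB : B₁ ⟶ B₀)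
    (αt : A₁ ⟶ B₁) (αb : A₀ ⟶ B₀) : Prop where
  w : αt ≫ fB = fA ≫ αb
  left : IsRegEpi fA
  right : IsRegEpi fB
  top : IsRegEpi αt
  bot : IsRegEpi αb
  comparison : IsRegEpi (pullback.lift fA αt w.symm : A₁ ⟶ pullback αb fB)

end DoubleExt

/-- The category `Ext C` of extensions: the full subcategory of the arrow category of `C`
determined by the regular epimorphisms. -/
abbrev ExtCat (C : Type u) [Category.{v} C] : Type max u v :=
  ObjectProperty.FullSubcategory (fun f : Arrow C => IsRegEpi f.hom)

/-- An object of `Ext C` from a regular epimorphism. -/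
def ExtCat.mk' {X Y : C} (f : X ⟶ Y) (hf : IsRegEpi f) : ExtCat C :=
  ⟨Arrow.mk f, hf⟩

/-- The top (domain) component of a morphism of `Ext C`. -/
def ExtCat.homLeft {f g : ExtCat C} (φ : f ⟶ g) : f.obj.left ⟶ g.obj.left :=
  CommaMorphism.left φ.hom

/-- The bottom (codomain) component of a morphism of `Ext C`. -/
def ExtCat.homRight {f g : ExtCat C} (φ : f ⟶ g) : f.obj.right ⟶ g.obj.right :=
  CommaMorphism.right φ.hom

lemma ExtCat.homLeft_comp {f g h : ExtCat C} (a : f ⟶ g) (b : g ⟶ h) :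
    ExtCat.homLeft (a ≫ b) = ExtCat.homLeft a ≫ ExtCat.homLeft b := rfl

lemma ExtCat.homRight_comp {f g h : ExtCat C} (a : f ⟶ g) (b : g ⟶ h) :
    ExtCat.homRight (a ≫ b) = ExtCat.homRight a ≫ ExtCat.homRight b := rfl

lemma ExtCat.hom_w {f g : ExtCat C} (φ : f ⟶ g) :
    ExtCat.homLeft φ ≫ g.obj.hom = f.obj.hom ≫ ExtCat.homRight φ :=
  CommaMorphism.w φ.hom

/-- A morphism of `Ext C` from a commutative square in `C`. -/
def ExtCat.homMk' {X₁ X₀ Y₁ Y₀ : C} {f : X₁ ⟶ X₀} {g : Y₁ ⟶ Y₀}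
    {hf : IsRegEpi f} {hg : IsRegEpi g}
    (u : X₁ ⟶ Y₁) (v : X₀ ⟶ Y₀) (w : u ≫ g = f ≫ v) :
    ExtCat.mk' f hf ⟶ ExtCat.mk' g hg :=
  ObjectProperty.homMk (Arrow.homMk (u := u) (v := v) w)

/-- A (commutative) square in `C`, with left vertical `left : A₁ ⟶ A₀`, right vertical
`right : B₁ ⟶ B₀`, top horizontal `top : A₁ ⟶ B₁` and bottom horizontal `bot : A₀ ⟶ B₀`. -/
structure Sq (C : Type u) [Category.{v} C] where
  A₁ : C
  A₀ : C
  B₁ : C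
  B₀ : C
  left : A₁ ⟶ A₀
  right : B₁ ⟶ B₀
  top : A₁ ⟶ B₁
  bot : A₀ ⟶ B₀
  w : top ≫ right = left ≫ bot

/-- The square is a double extension. -/
def Sq.IsDE [HasFiniteLimits C] (s : Sq C) : Prop :=
  IsDoubleExt s.left s.right s.top s.bot

/-- A commutative cube, presented as a morphism of squares `Φ : s ⟶ t`. -/
structure SqHom (s t : Sq C) where
  h₁₁ : s.A₁ ⟶ t.A₁
  h₁₀ : s.A₀ ⟶ t.A₀
  h₀₁ : s.B₁ ⟶ t.B₁
  h₀₀ : s.B₀ ⟶ t.B₀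
  wA : h₁₁ ≫ t.left = s.left ≫ h₁₀
  wB : h₀₁ ≫ t.right = s.right ≫ h₀₀
  wt : h₁₁ ≫ t.top = s.top ≫ h₀₁
  wb : h₁₀ ≫ t.bot = s.bot ≫ h₀₀

/-- Composition of cubes (as morphisms of squares). -/
def SqHom.comp {s t u : Sq C} (Φ : SqHom s t) (Ψ : SqHom t u) : SqHom s u where
  h₁₁ := Φ.h₁₁ ≫ Ψ.h₁₁
  h₁₀ := Φ.h₁₀ ≫ Ψ.h₁₀
  h₀₁ := Φ.h₀₁ ≫ Ψ.h₀₁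
  h₀₀ := Φ.h₀₀ ≫ Ψ.h₀₀
  wA := by rw [Category.assoc, Ψ.wA, ← Category.assoc, Φ.wA, Category.assoc]
  wB := by rw [Category.assoc, Ψ.wB, ← Category.assoc, Φ.wB, Category.assoc]
  wt := by rw [Category.assoc, Ψ.wt, ← Category.assoc, Φ.wt, Category.assoc]
  wb := by rw [Category.assoc, Ψ.wb, ← Category.assoc, Φ.wb, Category.assoc]

section Cube
variable [HasFiniteLimits C]

/-- Seen as a morphism `(σ, β) : s ⟶ t` between the double extensions `s` (as the arrow
`s.left → s.right`) and `t`, the face `σ` of the cube: the square from `s.left` to `t.left`. -/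
def SqHom.sigmaSq {s t : Sq C} (Φ : SqHom s t) : Sq C where
  A₁ := s.A₁
  A₀ := s.A₀
  B₁ := t.A₁
  B₀ := t.A₀
  left := s.left
  right := t.left
  top := Φ.h₁₁
  bot := Φ.h₁₀
  w := Φ.wA

/-- The face `β` of the cube: the square from `s.right` to `t.right`. -/
def SqHom.betaSq {s t : Sq C} (Φ : SqHom s t) : Sq C where
  A₁ := s.B₁
  A₀ := s.B₀
  B₁ := t.B₁
  B₀ := t.B₀
  left := s.right
  right := t.right
  top := Φ.h₀₁
  bot := Φ.h₀₀
  w := Φ.wB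

/-- Top component of the componentwise pullback of `t` (i.e. `α`) and `betaSq Φ` (i.e. `β`). -/
noncomputable def SqHom.P₁ {s t : Sq C} (Φ : SqHom s t) : C := pullback t.top Φ.h₀₁

/-- Bottom component of the componentwise pullback of `α` and `β`. -/
noncomputable def SqHom.P₀ {s t : Sq C} (Φ : SqHom s t) : C := pullback t.bot Φ.h₀₀

/-- The induced arrow between the components of the componentwise pullback of `α` and `β`. -/
noncomputable def SqHom.fP {s t : Sq C} (Φ : SqHom s t) : Φ.P₁ ⟶ Φ.P₀ :=
  pullback.map t.top Φ.h₀₁ t.bot Φ.h₀₀ t.left s.right t.right t.w Φ.wB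

/-- The top comparison morphism. -/
noncomputable def SqHom.c₁ {s t : Sq C} (Φ : SqHom s t) : s.A₁ ⟶ Φ.P₁ :=
  pullback.lift Φ.h₁₁ s.top Φ.wt

/-- The bottom comparison morphism. -/
noncomputable def SqHom.c₀ {s t : Sq C} (Φ : SqHom s t) : s.A₀ ⟶ Φ.P₀ :=
  pullback.lift Φ.h₁₀ s.bot Φ.wb

lemma SqHom.comp_w {s t : Sq C} (Φ : SqHom s t) : Φ.c₁ ≫ Φ.fP = s.left ≫ Φ.c₀ := by
  change pullback.lift Φ.h₁₁ s.top Φ.wt ≫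
      pullback.map t.top Φ.h₀₁ t.bot Φ.h₀₀ t.left s.right t.right t.w Φ.wB =
    s.left ≫ pullback.lift Φ.h₁₀ s.bot Φ.wb
  apply pullback.hom_ext
  · simp [Φ.wA, pullback.lift_fst, pullback.lift_fst_assoc]
  · simp [s.w, pullback.lift_snd, pullback.lift_snd_assoc]

/-- The comparison square of the cube `Φ`, from `s.left` to the componentwise pullback
of `α` and `β`. -/
noncomputable def SqHom.compSq {s t : Sq C} (Φ : SqHom s t) : Sq C where
  A₁ := s.A₁
  A₀ := s.A₀
  B₁ := Φ.P₁
  B₀ := Φ.P₀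
  left := s.left
  right := Φ.fP
  top := Φ.c₁
  bot := Φ.c₀
  w := Φ.comp_w

/-- A `3`-cubical extension: the two opposite faces `γ = s` and `α = t`, the two connecting
faces `σ` and `β`, and the comparison square to the componentwise pullback of `α` and `β`
are all double extensions. -/
def SqHom.Is3CubExt {s t : Sq C} (Φ : SqHom s t) : Prop :=
  s.IsDE ∧ t.IsDE ∧ Φ.sigmaSq.IsDE ∧ Φ.betaSq.IsDE ∧ Φ.compSq.IsDE

end Cube

/-- The cube `Φ : s ⟶ t` is a limit cube: the cone from the initial vertex `s.A₁` on the
diagram formed by the remaining seven vertices is a limit cone. -/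
def SqHom.IsLimitCube {s t : Sq C} (Φ : SqHom s t) : Prop :=
  ∀ (W : C) (wA₀ : W ⟶ s.A₀) (wB₁ : W ⟶ s.B₁) (wtA₁ : W ⟶ t.A₁),
    wA₀ ≫ s.bot = wB₁ ≫ s.right →
    wA₀ ≫ Φ.h₁₀ = wtA₁ ≫ t.left →
    wB₁ ≫ Φ.h₀₁ = wtA₁ ≫ t.top →
    ∃! u : W ⟶ s.A₁, u ≫ s.left = wA₀ ∧ u ≫ s.top = wB₁ ∧ u ≫ Φ.h₁₁ = wtA₁

/-- A discrete fibration (of order 3): a `3`-cubical extension which is a limit cube. -/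
def SqHom.IsDiscFib [HasFiniteLimits C] {s t : Sq C} (Φ : SqHom s t) : Prop :=
  Φ.Is3CubExt ∧ Φ.IsLimitCube
section Galois
variable [HasFiniteLimits C]

/-- A strongly E-Birkhoff Galois structure on `C`: a full replete reflective subcategory
(given by the predicate `inB`, the reflector `F` and the unit `η`) such that every unit
component is a regular epimorphism and every naturality square of the unit at a regular
epimorphism is a double extension. -/
structure BirkhoffStructure (C : Type u) [Category.{v} C] [HasFiniteLimits C] where
  inB : C → Prop
  replete : ∀ {X Y : C}, inB X → (X ≅ Y) → inB Y
  F : C ⥤ C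
  η : 𝟭 C ⟶ F
  obj_inB : ∀ A : C, inB (F.obj A)
  unit_regEpi : ∀ A : C, IsRegEpi (η.app A)
  univ : ∀ {A X : C}, inB X → ∀ g : A ⟶ X, ∃! h : F.obj A ⟶ X, η.app A ≫ h = g
  stronglyBirkhoff : ∀ {A B : C} (f : A ⟶ B), IsRegEpi f →
    IsDoubleExt f (F.map f) (η.app A) (η.app B)

/-- A trivial covering: a regular epimorphism whose unit naturality square is a pullback. -/
def TrivialCovering (G : BirkhoffStructure C) {T E : C} (t : T ⟶ E) : Prop :=
  IsRegEpi t ∧ IsPullback (G.η.app T) t (G.F.map t) (G.η.app E)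

/-- A covering: a regular epimorphism whose pullback along some regular epimorphism is a
trivial covering. -/
def Covering (G : BirkhoffStructure C) {A B : C} (c : A ⟶ B) : Prop :=
  IsRegEpi c ∧ ∃ (E : C) (e : E ⟶ B), IsRegEpi e ∧ TrivialCovering G (pullback.snd c e)

end Galois

/-- The underlying square in `C` of a morphism of `Ext C`. -/
def sqOfHom {f g : ExtCat C} (φ : f ⟶ g) : Sq C where
  A₁ := f.obj.left
  A₀ := f.obj.right
  B₁ := g.obj.left
  B₀ := g.obj.right
  left := f.obj.hom
  right := g.obj.hom
  top := ExtCat.homLeft φ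
  bot := ExtCat.homRight φ
  w := ExtCat.hom_w φ

/-- The underlying cube in `C` of a naturality square in `Ext C` of a natural
transformation `η₁ : 𝟭 (Ext C) ⟶ F₁` at a morphism `φ : f ⟶ g` of `Ext C`. -/
def natCube (F₁ : ExtCat C ⥤ ExtCat C) (η₁ : 𝟭 (ExtCat C) ⟶ F₁) {f g : ExtCat C}
    (φ : f ⟶ g) : SqHom (sqOfHom φ) (sqOfHom (F₁.map φ)) where
  h₁₁ := ExtCat.homLeft (η₁.app f)
  h₁₀ := ExtCat.homRight (η₁.app f)
  h₀₁ := ExtCat.homLeft (η₁.app g)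
  h₀₀ := ExtCat.homRight (η₁.app g)
  wA := ExtCat.hom_w (η₁.app f)
  wB := ExtCat.hom_w (η₁.app g)
  wt := by
    have h := congrArg ExtCat.homLeft (η₁.naturality φ)
    rw [ExtCat.homLeft_comp, ExtCat.homLeft_comp] at h
    exact h.symm
  wb := by
    have h := congrArg ExtCat.homRight (η₁.naturality φ)
    rw [ExtCat.homRight_comp, ExtCat.homRight_comp] at h
    exact h.symm

section LevelOne
variable [HasFiniteLimits C]

/-- The level-one Galois structure induced by a strongly E-Birkhoff Galois structure `G`:
the coverings form a reflective subcategory of `Ext C`, with reflector `F₁` and unit `η₁`,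
every unit component is a double extension, and the reflection is strongly E₂-Birkhoff. -/
structure LevelOne (G : BirkhoffStructure C) where
  F₁ : ExtCat C ⥤ ExtCat C
  η₁ : 𝟭 (ExtCat C) ⟶ F₁
  obj_cov : ∀ f : ExtCat C, Covering G (F₁.obj f).obj.hom
  univ : ∀ {f x : ExtCat C}, Covering G x.obj.hom → ∀ g : f ⟶ x,
    ∃! h : F₁.obj f ⟶ x, η₁.app f ≫ h = g
  unit_DE : ∀ f : ExtCat C, (sqOfHom (η₁.app f)).IsDE
  stronglyBirkhoff : ∀ {f g : ExtCat C} (φ : f ⟶ g), (sqOfHom φ).IsDE →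
    (natCube F₁ η₁ φ).Is3CubExt

/-- A trivial double covering: a morphism of `Ext C` whose underlying square is a double
extension and whose `η₁`-naturality square is a pullback in `Ext C`. -/
def TrivDoubleCov {G : BirkhoffStructure C} (L : LevelOne G) {f g : ExtCat C}
    (φ : f ⟶ g) : Prop :=
  (sqOfHom φ).IsDE ∧ IsPullback (L.η₁.app f) φ (L.F₁.map φ) (L.η₁.app g)

/-- A double covering: a double extension `α : d ⟶ c` in `Ext C` such that the pullback of
`α` along some double extension `γ : e ⟶ c` is a trivial double covering. -/
def DoubleCov {G : BirkhoffStructure C} (L : LevelOne G) {d c : ExtCat C}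
    (α : d ⟶ c) : Prop :=
  (sqOfHom α).IsDE ∧ ∃ (e : ExtCat C) (γ : e ⟶ c), (sqOfHom γ).IsDE ∧
    ∃ (p : ExtCat C) (pγ : p ⟶ e) (pα : p ⟶ d),
      IsPullback pγ pα γ α ∧ TrivDoubleCov L pγ

end LevelOne

/-! ### Auxiliary lemmas for Statement 17 -/

section Statement17Aux

variable {C : Type u} [Category.{v} C]

lemma isRegEpi_of_isIso {X Y : C} (f : X ⟶ Y) [IsIso f] : IsRegEpi f :=
  ⟨RegularEpi.ofIso (asIso f)⟩

lemma IsRegEpi.toEpi {X Y : C} {f : X ⟶ Y} (h : IsRegEpi f) : Epi f := by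
  obtain ⟨i⟩ := h
  exact @RegularEpi.epi _ _ _ _ f i

/-- Postcomposition of a regular epimorphism with an isomorphism is a regular
epimorphism. -/
lemma isRegEpi_comp_isIso {X Y Z : C} {e : X ⟶ Y} (j : Y ⟶ Z) [IsIso j]
    (he : IsRegEpi e) : IsRegEpi (e ≫ j) := by
  obtain ⟨re⟩ := he
  have hd : ∀ s : Cofork re.left re.right,
      e ≫ Cofork.IsColimit.desc re.isColimit s.π s.condition = s.π := fun s => by
    simpa using Cofork.IsColimit.π_desc' re.isColimit s.π s.condition
  refine ⟨⟨re.W, re.left, re.right,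
    by rw [← Category.assoc, re.w, Category.assoc], ?_⟩⟩
  refine Cofork.IsColimit.mk _
    (fun s => inv j ≫ Cofork.IsColimit.desc re.isColimit s.π s.condition)
    (fun s => ?_) (fun s m hm => ?_)
  · simp only [Cofork.π_ofπ, Category.assoc, IsIso.hom_inv_id_assoc]
    exact hd s
  · simp only [Cofork.π_ofπ] at hm
    have h2 : j ≫ m = Cofork.IsColimit.desc re.isColimit s.π s.condition := by
      refine Cofork.IsColimit.hom_ext re.isColimit ?_
      simp only [Cofork.π_ofπ]
      rw [hd s, ← Category.assoc]
      exact hm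
    show m = inv j ≫ Cofork.IsColimit.desc re.isColimit s.π s.condition
    rw [← h2, IsIso.inv_hom_id_assoc]

lemma isRegEpi_isIso_comp {X Y Z : C} (j : X ⟶ Y) [IsIso j] {e : Y ⟶ Z}
    (he : IsRegEpi e) : IsRegEpi (j ≫ e) := by
  obtain ⟨re⟩ := he
  have hw : (re.left ≫ inv j) ≫ j ≫ e = (re.right ≫ inv j) ≫ j ≫ e := by
    simp only [Category.assoc, IsIso.inv_hom_id_assoc]
    exact re.w
  have hcond : ∀ s : Cofork (re.left ≫ inv j) (re.right ≫ inv j),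
      re.left ≫ inv j ≫ s.π = re.right ≫ inv j ≫ s.π := fun s => by
    rw [← Category.assoc, ← Category.assoc]
    exact s.condition
  have hd : ∀ s : Cofork (re.left ≫ inv j) (re.right ≫ inv j),
      e ≫ Cofork.IsColimit.desc re.isColimit (inv j ≫ s.π) (hcond s)
        = inv j ≫ s.π := fun s => by
    simpa using Cofork.IsColimit.π_desc' re.isColimit (inv j ≫ s.π) (hcond s)
  refine ⟨⟨re.W, re.left ≫ inv j, re.right ≫ inv j, hw, ?_⟩⟩
  refine Cofork.IsColimit.mk _
    (fun s => Cofork.IsColimit.desc re.isColimit (inv j ≫ s.π) (hcond s))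
    (fun s => ?_) (fun s m hm => ?_)
  · simp only [Cofork.π_ofπ, Category.assoc]
    rw [hd s, IsIso.hom_inv_id_assoc]
  · simp only [Cofork.π_ofπ] at hm
    refine Cofork.IsColimit.hom_ext re.isColimit ?_
    simp only [Cofork.π_ofπ]
    rw [hd s, ← hm]
    simp [Category.assoc]

lemma isIso_of_isRegEpi_of_mono {X Y : C} {f : X ⟶ Y} (h : IsRegEpi f)
    (hm : Mono f) : IsIso f := by
  obtain ⟨i⟩ := h
  exact isIso_of_regularEpi_of_mono f i

lemma isIso_of_isRegEpi_of_retraction {X Y : C} {f : X ⟶ Y} (h : IsRegEpi f)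
    (r : Y ⟶ X) (hr : f ≫ r = 𝟙 X) : IsIso f := by
  haveI : Epi f := h.toEpi
  refine ⟨r, hr, ?_⟩
  rw [← cancel_epi f, ← Category.assoc, hr, Category.id_comp, Category.comp_id]

variable [HasFiniteLimits C]

/-- The unit of a strongly Birkhoff reflection is invertible at objects of `B`. -/
lemma eta_isIso_of_inB (G : BirkhoffStructure C) {X : C} (hX : G.inB X) :
    IsIso (G.η.app X) := by
  obtain ⟨h, hh, -⟩ := G.univ hX (𝟙 X)
  obtain ⟨k, -, hk⟩ := G.univ (G.obj_inB X) (G.η.app X)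
  have h1 : h ≫ G.η.app X = 𝟙 (G.F.obj X) := by
    have p1 : G.η.app X ≫ (h ≫ G.η.app X) = G.η.app X := by
      rw [← Category.assoc, hh]
      exact Category.id_comp _
    have p2 : G.η.app X ≫ 𝟙 (G.F.obj X) = G.η.app X := Category.comp_id _
    have e1 := hk (h ≫ G.η.app X) p1
    have e2 := hk (𝟙 (G.F.obj X)) p2
    rw [e1]
    exact e2.symm
  exact ⟨h, hh, h1⟩

lemma trivialCovering_of_isIso (G : BirkhoffStructure C) {X Y : C} (j : X ⟶ Y)
    [IsIso j] : TrivialCovering G j :=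
  ⟨isRegEpi_of_isIso j, IsPullback.of_vert_isIso ⟨(G.η.naturality j).symm⟩⟩

lemma trivialCovering_of_inB (G : BirkhoffStructure C) {X Y : C} {t : X ⟶ Y}
    (hX : G.inB X) (hY : G.inB Y) (ht : IsRegEpi t) : TrivialCovering G t := by
  haveI := eta_isIso_of_inB G hX
  haveI := eta_isIso_of_inB G hY
  exact ⟨ht, IsPullback.of_horiz_isIso ⟨(G.η.naturality t).symm⟩⟩

lemma trivialCovering_isIso_comp (G : BirkhoffStructure C) {P X Y : C}
    (j : P ⟶ X) [IsIso j] {t : X ⟶ Y} (h : TrivialCovering G t) :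
    TrivialCovering G (j ≫ t) := by
  refine ⟨isRegEpi_isIso_comp j h.1, ?_⟩
  have sq1 : IsPullback (G.η.app P) j (G.F.map j) (G.η.app X) :=
    IsPullback.of_vert_isIso ⟨(G.η.naturality j).symm⟩
  have hp := sq1.paste_vert h.2
  rw [G.F.map_comp]
  exact hp

lemma covering_of_trivialCovering (G : BirkhoffStructure C) {X Y : C} {t : X ⟶ Y}
    (h : TrivialCovering G t) : Covering G t := by
  refine ⟨h.1, Y, 𝟙 Y, isRegEpi_of_isIso _, ?_⟩
  have hpb : IsPullback (𝟙 X) t t (𝟙 Y) := IsPullback.of_horiz_isIso ⟨by simp⟩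
  have hfst : hpb.isoPullback.hom ≫ pullback.fst t (𝟙 Y) = 𝟙 X :=
    hpb.isoPullback_hom_fst
  haveI : IsIso (hpb.isoPullback.hom ≫ pullback.fst t (𝟙 Y)) := by
    rw [hfst]
    infer_instance
  haveI : IsIso (pullback.fst t (𝟙 Y)) :=
    IsIso.of_isIso_comp_left hpb.isoPullback.hom _
  have hc : pullback.fst t (𝟙 Y) ≫ t = pullback.snd t (𝟙 Y) := by
    simpa using pullback.condition (f := t) (g := 𝟙 Y)
  rw [← hc]
  exact trivialCovering_isIso_comp G _ h

lemma covering_id (G : BirkhoffStructure C) (X : C) : Covering G (𝟙 X) :=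
  covering_of_trivialCovering G (trivialCovering_of_isIso G (𝟙 X))

/-- Constructor for morphisms of `Ext C`. -/
def extHomMk {f g : ExtCat C} (u : f.obj.left ⟶ g.obj.left)
    (v : f.obj.right ⟶ g.obj.right) (w : u ≫ g.obj.hom = f.obj.hom ≫ v) :
    f ⟶ g :=
  ObjectProperty.homMk (Arrow.homMk (u := u) (v := v) w)

@[simp] lemma extHomMk_left {f g : ExtCat C} (u : f.obj.left ⟶ g.obj.left)
    (v : f.obj.right ⟶ g.obj.right) (w : u ≫ g.obj.hom = f.obj.hom ≫ v) :
    ExtCat.homLeft (extHomMk u v w) = u := rfl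

@[simp] lemma extHomMk_right {f g : ExtCat C} (u : f.obj.left ⟶ g.obj.left)
    (v : f.obj.right ⟶ g.obj.right) (w : u ≫ g.obj.hom = f.obj.hom ≫ v) :
    ExtCat.homRight (extHomMk u v w) = v := rfl

lemma ext_hom_ext {f g : ExtCat C} {a b : f ⟶ g}
    (h₁ : ExtCat.homLeft a = ExtCat.homLeft b)
    (h₂ : ExtCat.homRight a = ExtCat.homRight b) : a = b :=
  ObjectProperty.hom_ext _ (CommaMorphism.ext h₁ h₂)

/-- The codomain component of the level-one unit is invertible. -/
lemma unitRight_isIso {G : BirkhoffStructure C} (L : LevelOne G) (f : ExtCat C) :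
    IsIso (ExtCat.homRight (L.η₁.app f)) := by
  have hid : IsRegEpi (𝟙 f.obj.right) := isRegEpi_of_isIso _
  have hcov : Covering G (ExtCat.mk' (𝟙 f.obj.right) hid).obj.hom :=
    covering_id G f.obj.right
  have hw : f.obj.hom ≫ (ExtCat.mk' (𝟙 f.obj.right) hid).obj.hom
      = f.obj.hom ≫ 𝟙 f.obj.right := rfl
  obtain ⟨h, hh, -⟩ := L.univ hcov (extHomMk f.obj.hom (𝟙 f.obj.right) hw)
  have hr : ExtCat.homRight (L.η₁.app f) ≫ ExtCat.homRight h = 𝟙 f.obj.right := by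
    have := congrArg ExtCat.homRight hh
    rw [ExtCat.homRight_comp] at this
    exact this
  have hre : IsRegEpi (ExtCat.homRight (L.η₁.app f)) := by
    obtain ⟨-, -, -, -, hbot, -⟩ := L.unit_DE f
    exact hbot
  exact isIso_of_isRegEpi_of_retraction hre _ hr

/-- Transposing a double extension. -/
lemma IsDoubleExt.transpose {A₁ A₀ B₁ B₀ : C} {fA : A₁ ⟶ A₀} {fB : B₁ ⟶ B₀}
    {αt : A₁ ⟶ B₁} {αb : A₀ ⟶ B₀} (h : IsDoubleExt fA fB αt αb) :
    IsDoubleExt αt αb fA fB := by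
  refine ⟨h.w.symm, h.top, h.bot, h.left, h.right, ?_⟩
  have key : pullback.lift fA αt h.w.symm ≫ (pullbackSymmetry αb fB).hom
      = pullback.lift αt fA h.w := by
    apply pullback.hom_ext <;> simp
    · exact (pullback.lift_snd _ _ _).trans (pullback.lift_fst _ _ _).symm
    · exact (pullback.lift_fst _ _ _).trans (pullback.lift_snd _ _ _).symm
  have hre := isRegEpi_comp_isIso (pullbackSymmetry αb fB).hom h.comparison
  rw [key] at hre
  exact hre

/-- The main auxiliary result: a double extension `φ : f ⟶ g` in `Ext C` which admits
a morphism `σ` into a covering `x` such that `f.hom`, `φ.left`, `σ.left` are jointly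
monic (on the domain vertex) is a trivial double covering. -/
lemma trivDoubleCov_of_sep {G : BirkhoffStructure C} (L : LevelOne G)
    {f g x : ExtCat C} (φ : f ⟶ g) (hDE : (sqOfHom φ).IsDE)
    (hx : Covering G x.obj.hom) (σ : f ⟶ x)
    (hsep : ∀ {W : C} (a b : W ⟶ f.obj.left),
      a ≫ f.obj.hom = b ≫ f.obj.hom →
      a ≫ ExtCat.homLeft φ = b ≫ ExtCat.homLeft φ →
      a ≫ ExtCat.homLeft σ = b ≫ ExtCat.homLeft σ → a = b) :
    TrivDoubleCov L φ := by
  set Ψ : SqHom (sqOfHom φ) (sqOfHom (L.F₁.map φ)) := natCube L.F₁ L.η₁ φ with hΨ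
  obtain ⟨-, -, -, hc₁re, hc₀re, -⟩ := (L.stronglyBirkhoff φ hDE).2.2.2.2
  have e1fst : Ψ.c₁ ≫ pullback.fst _ _ = ExtCat.homLeft (L.η₁.app f) :=
    pullback.lift_fst _ _ _
  have e1snd : Ψ.c₁ ≫ pullback.snd _ _ = ExtCat.homLeft φ :=
    pullback.lift_snd _ _ _
  have e0fst : Ψ.c₀ ≫ pullback.fst _ _ = ExtCat.homRight (L.η₁.app f) :=
    pullback.lift_fst _ _ _
  have e0snd : Ψ.c₀ ≫ pullback.snd _ _ = ExtCat.homRight φ :=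
    pullback.lift_snd _ _ _
  haveI hdf : IsIso (ExtCat.homRight (L.η₁.app f)) := unitRight_isIso L f
  have hw1 : ExtCat.homLeft (L.η₁.app f) ≫ (L.F₁.obj f).obj.hom
      = f.obj.hom ≫ ExtCat.homRight (L.η₁.app f) := ExtCat.hom_w (L.η₁.app f)
  have hc₀iso : IsIso Ψ.c₀ := by
    refine isIso_of_isRegEpi_of_retraction hc₀re
      (pullback.fst _ _ ≫ @inv _ _ _ _ (ExtCat.homRight (L.η₁.app f)) hdf) ?_
    erw [← Category.assoc, e0fst, IsIso.hom_inv_id]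
  obtain ⟨h, hσfac, -⟩ := L.univ hx σ
  have hc₁mono : Mono Ψ.c₁ := by
    constructor
    intro Z a b hab
    have h1 : a ≫ ExtCat.homLeft (L.η₁.app f) = b ≫ ExtCat.homLeft (L.η₁.app f) := by
      erw [← e1fst, ← Category.assoc, ← Category.assoc, hab]
    have h2 : a ≫ ExtCat.homLeft φ = b ≫ ExtCat.homLeft φ := by
      erw [← e1snd, ← Category.assoc, ← Category.assoc, hab]
    have h3 : a ≫ f.obj.hom = b ≫ f.obj.hom := by
      have key : f.obj.hom = ExtCat.homLeft (L.η₁.app f) ≫ (L.F₁.obj f).obj.hom ≫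
          @inv _ _ _ _ (ExtCat.homRight (L.η₁.app f)) hdf := by
        erw [← Category.assoc, hw1, Category.assoc, IsIso.hom_inv_id, Category.comp_id]
      erw [key, ← Category.assoc a, ← Category.assoc b, h1]
    have h4 : a ≫ ExtCat.homLeft σ = b ≫ ExtCat.homLeft σ := by
      erw [← hσfac, ExtCat.homLeft_comp, ← Category.assoc, ← Category.assoc, h1]
    exact hsep a b h3 h2 h4
  have hc₁iso : IsIso Ψ.c₁ := isIso_of_isRegEpi_of_mono hc₁re hc₁mono
  haveI := hc₁iso
  haveI := hc₀iso
  have comm : L.η₁.app f ≫ L.F₁.map φ = φ ≫ L.η₁.app g := (L.η₁.naturality φ).symm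
  have hfPfst : Ψ.fP ≫ pullback.fst _ _ = pullback.fst _ _ ≫ (L.F₁.obj f).obj.hom :=
    pullback.lift_fst _ _ _
  have hfPsnd : Ψ.fP ≫ pullback.snd _ _ = pullback.snd _ _ ≫ g.obj.hom :=
    pullback.lift_snd _ _ _
  have hinv : inv Ψ.c₁ ≫ f.obj.hom = Ψ.fP ≫ inv Ψ.c₀ := by
    erw [IsIso.inv_comp_eq, ← Category.assoc, Ψ.comp_w, Category.assoc,
      IsIso.hom_inv_id, Category.comp_id]
    rfl
  refine ⟨hDE, ?_⟩
  refine IsPullback.of_isLimit (PullbackCone.IsLimit.mk comm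
    (fun s =>
      extHomMk
        ((pullback.lift (ExtCat.homLeft s.fst) (ExtCat.homLeft s.snd)
          (by
            show ExtCat.homLeft s.fst ≫ ExtCat.homLeft (L.F₁.map φ)
              = ExtCat.homLeft s.snd ≫ ExtCat.homLeft (L.η₁.app g)
            rw [← ExtCat.homLeft_comp, ← ExtCat.homLeft_comp, s.condition])
          : s.pt.obj.left ⟶ Ψ.P₁) ≫ @inv _ _ _ _ Ψ.c₁ hc₁iso)
        ((pullback.lift (ExtCat.homRight s.fst) (ExtCat.homRight s.snd)
          (by
            show ExtCat.homRight s.fst ≫ ExtCat.homRight (L.F₁.map φ)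
              = ExtCat.homRight s.snd ≫ ExtCat.homRight (L.η₁.app g)
            rw [← ExtCat.homRight_comp, ← ExtCat.homRight_comp, s.condition])
          : s.pt.obj.right ⟶ Ψ.P₀) ≫ @inv _ _ _ _ Ψ.c₀ hc₀iso)
        (by
          simp only [Functor.id_obj]
          erw [Category.assoc, hinv, ← Category.assoc, ← Category.assoc,
            cancel_mono (inv Ψ.c₀)]
          apply pullback.hom_ext
          · erw [Category.assoc, hfPfst, ← Category.assoc, pullback.lift_fst,
              Category.assoc, pullback.lift_fst, ExtCat.hom_w s.fst]
            exact rfl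
          · erw [Category.assoc, hfPsnd, ← Category.assoc, pullback.lift_snd,
              Category.assoc, pullback.lift_snd, ExtCat.hom_w s.snd]
            exact rfl))
    (fun s => ?_) (fun s => ?_) (fun s m hm₁ hm₂ => ?_))
  · apply ext_hom_ext
    · simp only [ExtCat.homLeft_comp, extHomMk_left, Category.assoc, ← e1fst,
        IsIso.inv_hom_id_assoc, pullback.lift_fst]
      erw [Category.assoc, IsIso.inv_hom_id_assoc, pullback.lift_fst]
    · simp only [ExtCat.homRight_comp, extHomMk_right, Category.assoc, ← e0fst,
        IsIso.inv_hom_id_assoc, pullback.lift_fst]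
      erw [Category.assoc, IsIso.inv_hom_id_assoc, pullback.lift_fst]
  · apply ext_hom_ext
    · simp only [ExtCat.homLeft_comp, extHomMk_left, Category.assoc, ← e1snd,
        IsIso.inv_hom_id_assoc, pullback.lift_snd]
      erw [Category.assoc, IsIso.inv_hom_id_assoc, pullback.lift_snd]
    · simp only [ExtCat.homRight_comp, extHomMk_right, Category.assoc, ← e0snd,
        IsIso.inv_hom_id_assoc, pullback.lift_snd]
      erw [Category.assoc, IsIso.inv_hom_id_assoc, pullback.lift_snd]
  · apply ext_hom_ext
    · simp only [extHomMk_left]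
      erw [IsIso.eq_comp_inv]
      apply pullback.hom_ext
      · erw [Category.assoc, e1fst, pullback.lift_fst, ← ExtCat.homLeft_comp, hm₁]
      · erw [Category.assoc, e1snd, pullback.lift_snd, ← ExtCat.homLeft_comp, hm₂]
    · simp only [extHomMk_right]
      erw [IsIso.eq_comp_inv]
      apply pullback.hom_ext
      · erw [Category.assoc, e0fst, pullback.lift_fst, ← ExtCat.homRight_comp, hm₁]
      · erw [Category.assoc, e0snd, pullback.lift_snd, ← ExtCat.homRight_comp, hm₂]

end Statement17Aux

/-- a symmetrically trivial double covering (a double extension `τ` admitting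
a discrete fibration `τ ⟶ β` into a double extension `β` all of whose vertices lie in `B`)
is a trivial double covering in either of the two possible directions. -/
theorem statement_17 {C : Type u} [Category.{v} C] [HasFiniteLimits C] [BarrExact C]
    {G : BirkhoffStructure C} (L : LevelOne G)
    (τ β : Sq C) (hτ : τ.IsDE) (hβ : β.IsDE)
    (hβ₁ : G.inB β.A₁) (hβ₂ : G.inB β.A₀) (hβ₃ : G.inB β.B₁) (hβ₄ : G.inB β.B₀)
    (Φ : SqHom τ β) (hΦ : Φ.IsDiscFib) :
    -- `τ` as the morphism `τ.left ⟶ τ.right` of `Ext C` is a trivial double covering ...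
    TrivDoubleCov L (ExtCat.homMk' (hf := hτ.left) (hg := hτ.right) τ.top τ.bot τ.w) ∧
    -- ... and so is `τ` in the other direction, as the morphism `τ.top ⟶ τ.bot`:
    TrivDoubleCov L (ExtCat.homMk' (hf := hτ.top) (hg := hτ.bot) τ.left τ.right τ.w.symm) := by
  constructor
  · refine trivDoubleCov_of_sep L (x := ExtCat.mk' β.left hβ.left)
      (ExtCat.homMk' (hf := hτ.left) (hg := hτ.right) τ.top τ.bot τ.w) hτ
      (covering_of_trivialCovering G (trivialCovering_of_inB G hβ₁ hβ₂ hβ.left))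
      (ExtCat.homMk' (hf := hτ.left) (hg := hβ.left) Φ.h₁₁ Φ.h₁₀ Φ.wA)
      (fun {W} a b h3 h2 h4 => ?_)
    obtain ⟨u, -, huniq⟩ := hΦ.2 W (b ≫ τ.left) (b ≫ τ.top) (b ≫ Φ.h₁₁)
      (by erw [Category.assoc, Category.assoc, τ.w]; exact rfl)
      (by erw [Category.assoc, Category.assoc, Φ.wA]; exact rfl)
      (by erw [Category.assoc, Category.assoc, Φ.wt]; exact rfl)
    rw [huniq a ⟨h3, h2, h4⟩, huniq b ⟨rfl, rfl, rfl⟩]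
  · refine trivDoubleCov_of_sep L (x := ExtCat.mk' β.top hβ.top)
      (ExtCat.homMk' (hf := hτ.top) (hg := hτ.bot) τ.left τ.right τ.w.symm)
      (IsDoubleExt.transpose hτ)
      (covering_of_trivialCovering G (trivialCovering_of_inB G hβ₁ hβ₃ hβ.top))
      (ExtCat.homMk' (hf := hτ.top) (hg := hβ.top) Φ.h₁₁ Φ.h₀₁ Φ.wt)
      (fun {W} a b h3 h2 h4 => ?_)
    obtain ⟨u, -, huniq⟩ := hΦ.2 W (b ≫ τ.left) (b ≫ τ.top) (b ≫ Φ.h₁₁)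
      (by erw [Category.assoc, Category.assoc, τ.w]; exact rfl)
      (by erw [Category.assoc, Category.assoc, Φ.wA]; exact rfl)
      (by erw [Category.assoc, Category.assoc, Φ.wt]; exact rfl)
    rw [huniq a ⟨h2, h3, h4⟩, huniq b ⟨rfl, rfl, rfl⟩]

end Paper
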